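/- Let A be a q×n complex matrix, W a nonzero n×q complex matrix, m a positive integer, and k = max(Ind(AW), Ind(WA)). Then rank(W·(AW)^k) = rank((AW)^k) = rank((WA)^k). -/
import Mathlib


open Matrix

/-- Index of a square matrix: least `d` with `rank (B^d) = rank (B^(d+1))`. -/
noncomputable def matInd {ι : Type*} [Fintype ι] [DecidableEq ι] (B : Matrix ι ι ℂ) : ℕ :=
  sInf {d : ℕ | (B ^ d).rank = (B ^ (d + 1)).rank}

/-- `X` is the Moore-Penrose inverse of `A` (four Penrose equations). -/
noncomputable def IsMP {ι κ : Type*} [Fintype ι] [Fintype κ] (A : Matrix ι κ ℂ) (X : Matrix κ ι ℂ) : Prop :=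
  A * X * A = A ∧ X * A * X = X ∧ (A * X)ᴴ = A * X ∧ (X * A)ᴴ = X * A

/-- Column space (range) of a matrix. -/
noncomputable def mrange {ι κ : Type*} [Fintype κ] (M : Matrix ι κ ℂ) : Submodule ℂ (ι → ℂ) :=
  LinearMap.range M.mulVecLin

/-- Null space of a matrix. -/
noncomputable def mker {ι κ : Type*} [Fintype κ] (M : Matrix ι κ ℂ) : Submodule ℂ (κ → ℂ) :=
  LinearMap.ker M.mulVecLin

/-- `X` is the core-EP inverse of `B`. -/
noncomputable def IsCoreEP {ι : Type*} [Fintype ι] [DecidableEq ι] (B X : Matrix ι ι ℂ) : Prop :=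
  X * B * X = X ∧ mrange X = mrange (B ^ matInd B) ∧ mrange Xᴴ = mrange (B ^ matInd B)

/-- `X` is the Drazin inverse of `B`. -/
noncomputable def IsDrazin {ι : Type*} [Fintype ι] [DecidableEq ι] (B X : Matrix ι ι ℂ) : Prop :=
  X * B * X = X ∧ B * X = X * B ∧ B ^ (matInd B + 1) * X = B ^ matInd B

/-- `X` is the group inverse of `B`. -/
noncomputable def IsGroupInv {ι : Type*} [Fintype ι] (B X : Matrix ι ι ℂ) : Prop :=
  B * X * B = B ∧ X * B * X = X ∧ B * X = X * B

/-- Frobenius norm of a matrix. -/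
noncomputable def frobNorm {ι κ : Type*} [Fintype ι] [Fintype κ] (M : Matrix ι κ ℂ) : ℝ :=
  Real.sqrt (∑ i, ∑ j, ‖M i j‖ ^ 2)


section Aux

variable {ι : Type*} [Fintype ι] [DecidableEq ι]

lemma rank_pow_succ_le (B : Matrix ι ι ℂ) (d : ℕ) :
    (B ^ (d + 1)).rank ≤ (B ^ d).rank := by
  rw [pow_succ]
  exact Matrix.rank_mul_le_left _ _

lemma exists_rank_pow_eq (B : Matrix ι ι ℂ) :
    ∃ d, (B ^ d).rank = (B ^ (d + 1)).rank := by
  by_contra h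
  push_neg at h
  have hlt : ∀ d, (B ^ (d+1)).rank < (B ^ d).rank := fun d =>
    lt_of_le_of_ne (rank_pow_succ_le B d) (fun he => h d he.symm)
  have key : ∀ d, (B ^ d).rank + d ≤ (B ^ 0).rank := by
    intro d
    induction d with
    | zero => simp
    | succ d ih =>
        have h1 : (B ^ (d+1)).rank + 1 ≤ (B ^ d).rank := hlt d
        calc (B ^ (d+1)).rank + (d+1) = ((B ^ (d+1)).rank + 1) + d := by ring
          _ ≤ (B ^ d).rank + d := Nat.add_le_add_right h1 d
          _ ≤ (B ^ 0).rank := ih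
  have h1 := key ((B ^ 0).rank + 1)
  have h2 : (B ^ 0).rank + 1 ≤ (B ^ 0).rank := le_trans (Nat.le_add_left _ _) h1
  exact Nat.not_succ_le_self _ h2

lemma rank_pow_step (B : Matrix ι ι ℂ) (d : ℕ)
    (h : (B ^ d).rank = (B ^ (d + 1)).rank) :
    (B ^ (d + 1)).rank = (B ^ (d + 2)).rank := by
  have hr : ∀ e : ℕ, LinearMap.range (B ^ (e+1)).mulVecLin
      = Submodule.map B.mulVecLin (LinearMap.range (B ^ e).mulVecLin) := by
    intro e
    rw [pow_succ']
    rw [Matrix.mulVecLin_mul, LinearMap.range_comp]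
  have hle : LinearMap.range (B ^ (d+1)).mulVecLin ≤ LinearMap.range (B ^ d).mulVecLin := by
    rw [pow_succ, Matrix.mulVecLin_mul]
    exact LinearMap.range_comp_le_range _ _
  have heq : LinearMap.range (B ^ (d+1)).mulVecLin = LinearMap.range (B ^ d).mulVecLin :=
    Submodule.eq_of_le_of_finrank_le hle (le_of_eq h)
  have h2 : LinearMap.range (B ^ (d+2)).mulVecLin = LinearMap.range (B ^ (d+1)).mulVecLin := by
    rw [show d+2 = (d+1)+1 from rfl, hr (d+1), heq, ← hr d]
    exact heq
  rw [Matrix.rank, Matrix.rank, h2]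

end Aux

section Aux2
variable {ι : Type*} [Fintype ι] [DecidableEq ι]

lemma rank_pow_stable (B : Matrix ι ι ℂ) {k : ℕ} (hk : matInd B ≤ k) :
    (B ^ k).rank = (B ^ (k + 1)).rank := by
  induction k, hk using Nat.le_induction with
  | base => exact Nat.sInf_mem (exists_rank_pow_eq B)
  | succ k hk ih => exact rank_pow_step B k ih

lemma swap_pow {κ : Type*} [Fintype κ] [DecidableEq κ] (A : Matrix ι κ ℂ) (W : Matrix κ ι ℂ) (s : ℕ) :
    (W * A) ^ (s + 1) = W * (A * W) ^ s * A := by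
  induction s with
  | zero => simp [mul_assoc]
  | succ s ih =>
      rw [pow_succ, ih, pow_succ]
      simp [Matrix.mul_assoc]

end Aux2


theorem stmt18 {q n : ℕ} (A : Matrix (Fin q) (Fin n) ℂ) (W : Matrix (Fin n) (Fin q) ℂ)
    (hW : W ≠ 0) (m : ℕ) (hm : 0 < m) (k : ℕ)
    (hk : k = max (matInd (A * W)) (matInd (W * A))) :
    (W * (A * W) ^ k).rank = ((A * W) ^ k).rank ∧
      ((A * W) ^ k).rank = ((W * A) ^ k).rank := by

  have hAW : ((A * W) ^ k).rank = ((A * W) ^ (k + 1)).rank :=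
    rank_pow_stable _ (hk ▸ le_max_left _ _)
  have hWA : ((W * A) ^ k).rank = ((W * A) ^ (k + 1)).rank :=
    rank_pow_stable _ (hk ▸ le_max_right _ _)
  have h1 : (W * (A * W) ^ k).rank ≤ ((A * W) ^ k).rank := Matrix.rank_mul_le_right _ _
  have e1 : (A * W) ^ (k + 1) = A * (W * (A * W) ^ k) := by
    rw [pow_succ', Matrix.mul_assoc]
  have h2 : ((A * W) ^ k).rank ≤ (W * (A * W) ^ k).rank := by
    rw [hAW, e1]; exact Matrix.rank_mul_le_right _ _
  have h3 : ((W * A) ^ k).rank ≤ ((A * W) ^ k).rank := by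
    rw [hWA, swap_pow]
    exact le_trans (Matrix.rank_mul_le_left _ _) (Matrix.rank_mul_le_right _ _)
  have h4 : ((A * W) ^ k).rank ≤ ((W * A) ^ k).rank := by
    rw [hAW, swap_pow]
    exact le_trans (Matrix.rank_mul_le_left _ _) (Matrix.rank_mul_le_right _ _)
  exact ⟨le_antisymm h1 h2, le_antisymm h4 h3⟩
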